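/- Let $(M^n_t)_{0\le t\le T}$ be nonnegative càdlàg supermartingales with $M^n_t \le M^{n+1}_t$ a.s. for all $t,n$, and let $M_t = \lim_n M^n_t$ pointwise a.s. with $E[M_0]<\infty$. Then $(M_t)_{0\le t\le T}$ is a supermartingale and $t \mapsto E[M_t]$ is right-continuous. -/

import Mathlib

open MeasureTheory Filter Set

open Topology

variable {Ω : Type*} {m0 : MeasurableSpace Ω}

/-- A supermartingale on the time interval `[0, T]`. -/
def SupermartingaleOn (𝓕 : Filtration ℝ m0) (μ : Measure Ω) (f : ℝ → Ω → ℝ) (T : ℝ) : Prop :=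
  (∀ t ∈ Icc (0 : ℝ) T, StronglyMeasurable[𝓕 t] (f t)) ∧
  (∀ t ∈ Icc (0 : ℝ) T, Integrable (f t) μ) ∧
  ∀ s t : ℝ, s ∈ Icc (0 : ℝ) T → t ∈ Icc (0 : ℝ) T → s ≤ t → μ[f t | 𝓕 s] ≤ᵐ[μ] f s

/-- A monotone a.s. limit `M` of nonnegative càdlàg supermartingales `M^n`
with `E[M 0] < ∞` is a supermartingale, and `t ↦ E[M t]` is right-continuous on `[0, T]`. -/
theorem monotone_limit_supermartingale_and_right_continuity
    (𝓕 : Filtration ℝ m0) (μ : Measure Ω) [IsProbabilityMeasure μ]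
    (T : ℝ) (hT : 0 ≤ T) (M : ℕ → ℝ → Ω → ℝ) (Mlim : ℝ → Ω → ℝ)
    (hMrc : ∀ n, ∀ᵐ ω ∂μ, ∀ t ∈ Icc (0 : ℝ) T, ContinuousWithinAt (fun s => M n s ω) (Ici t) t)
    (hsup : ∀ n, SupermartingaleOn 𝓕 μ (M n) T)
    (hnonneg : ∀ n, ∀ t ∈ Icc (0 : ℝ) T, ∀ᵐ ω ∂μ, 0 ≤ M n t ω)
    (hmono : ∀ n, ∀ t ∈ Icc (0 : ℝ) T, ∀ᵐ ω ∂μ, M n t ω ≤ M (n + 1) t ω)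
    (hconv : ∀ t ∈ Icc (0 : ℝ) T, ∀ᵐ ω ∂μ,
      Tendsto (fun n => M n t ω) atTop (nhds (Mlim t ω)))
    (hmeas : ∀ t ∈ Icc (0 : ℝ) T, StronglyMeasurable[𝓕 t] (Mlim t))
    (hint : Integrable (Mlim 0) μ) :
    SupermartingaleOn 𝓕 μ Mlim T ∧
      ∀ t ∈ Icc (0 : ℝ) T,
        ContinuousWithinAt (fun s => ∫ ω, Mlim s ω ∂μ) (Icc t T) t := by
  have h0 : (0 : ℝ) ∈ Icc (0 : ℝ) T := ⟨le_refl _, hT⟩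
  have hintM : ∀ n, ∀ t ∈ Icc (0 : ℝ) T, Integrable (M n t) μ := fun n => (hsup n).2.1
  have hcondM : ∀ n, ∀ s t : ℝ, s ∈ Icc (0 : ℝ) T → t ∈ Icc (0 : ℝ) T → s ≤ t →
      μ[M n t | 𝓕 s] ≤ᵐ[μ] M n s := fun n => (hsup n).2.2
  -- a.e. monotonicity in `n`
  have hmonoAll : ∀ t ∈ Icc (0 : ℝ) T, ∀ᵐ ω ∂μ, Monotone fun n => M n t ω := by
    intro t ht
    filter_upwards [ae_all_iff.2 fun n => hmono n t ht] with ω hω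
    exact monotone_nat_of_le_succ hω
  have hle : ∀ n, ∀ t ∈ Icc (0 : ℝ) T, M n t ≤ᵐ[μ] Mlim t := by
    intro n t ht
    filter_upwards [hmonoAll t ht, hconv t ht] with ω h1 h2
    exact h1.ge_of_tendsto h2 n
  have hMlim_nonneg : ∀ t ∈ Icc (0 : ℝ) T, 0 ≤ᵐ[μ] Mlim t := by
    intro t ht
    filter_upwards [hnonneg 0 t ht, hle 0 t ht] with ω h1 h2
    exact h1.trans h2
  -- `E[M n t]` is antitone in `t`
  have hFn_anti : ∀ n, ∀ s ∈ Icc (0 : ℝ) T, ∀ t ∈ Icc (0 : ℝ) T, s ≤ t →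
      ∫ ω, M n t ω ∂μ ≤ ∫ ω, M n s ω ∂μ := by
    intro n s hs t ht hst
    rw [← integral_condExp (𝓕.le s) (f := M n t)]
    exact integral_mono_ae integrable_condExp (hintM n s hs) (hcondM n s t hs ht hst)
  have hC : ∀ n, ∀ t ∈ Icc (0 : ℝ) T, ∫ ω, M n t ω ∂μ ≤ ∫ ω, Mlim 0 ω ∂μ := fun n t ht =>
    (hFn_anti n 0 h0 t ht ht.1).trans (integral_mono_ae (hintM n 0 h0) hint (hle n 0 h0))
  -- integrability of the limit
  have hintlim : ∀ t ∈ Icc (0 : ℝ) T, Integrable (Mlim t) μ := by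
    intro t ht
    refine ⟨((hmeas t ht).mono (𝓕.le t)).aestronglyMeasurable,
      (hasFiniteIntegral_iff_ofReal (hMlim_nonneg t ht)).2 ?_⟩
    have htd : Tendsto (fun n => ∫⁻ ω, ENNReal.ofReal (M n t ω) ∂μ) atTop
        (𝓝 (∫⁻ ω, ENNReal.ofReal (Mlim t ω) ∂μ)) := by
      refine lintegral_tendsto_of_tendsto_of_monotone
        (fun n => (hintM n t ht).aemeasurable.ennreal_ofReal) ?_ ?_
      · filter_upwards [hmonoAll t ht] with ω hω
        exact fun i j hij => ENNReal.ofReal_le_ofReal (hω hij)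
      · filter_upwards [hconv t ht] with ω hω
        exact (ENNReal.continuous_ofReal.tendsto _).comp hω
    have hb : ∀ n, ∫⁻ ω, ENNReal.ofReal (M n t ω) ∂μ
        ≤ ENNReal.ofReal (∫ ω, Mlim 0 ω ∂μ) := by
      intro n
      rw [← ofReal_integral_eq_lintegral_ofReal (hintM n t ht) (hnonneg n t ht)]
      exact ENNReal.ofReal_le_ofReal (hC n t ht)
    exact lt_of_le_of_lt (le_of_tendsto' htd hb) ENNReal.ofReal_lt_top
  -- convergence of expectations
  have hFconv : ∀ t ∈ Icc (0 : ℝ) T,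
      Tendsto (fun n => ∫ ω, M n t ω ∂μ) atTop (𝓝 (∫ ω, Mlim t ω ∂μ)) := fun t ht =>
    integral_tendsto_of_tendsto_of_monotone (fun n => hintM n t ht) (hintlim t ht)
      (hmonoAll t ht) (hconv t ht)
  -- the supermartingale inequality for the limit
  have hcond : ∀ s t : ℝ, s ∈ Icc (0 : ℝ) T → t ∈ Icc (0 : ℝ) T → s ≤ t →
      μ[Mlim t | 𝓕 s] ≤ᵐ[μ] Mlim s := by
    intro s t hs ht hst
    have hm : 𝓕 s ≤ m0 := 𝓕.le s
    have h1 : StronglyMeasurable[𝓕 s] (μ[Mlim t | 𝓕 s]) := stronglyMeasurable_condExp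
    have hci : Integrable (μ[Mlim t | 𝓕 s]) μ := integrable_condExp
    have htr : μ[Mlim t | 𝓕 s] ≤ᵐ[μ.trim hm] Mlim s := by
      refine ae_le_of_forall_setIntegral_le (hci.trim hm h1)
        ((hintlim s hs).trim hm (hmeas s hs)) ?_
      intro A hA _
      rw [← setIntegral_trim hm h1 hA, ← setIntegral_trim hm (hmeas s hs) hA,
        setIntegral_condExp hm (hintlim t ht) hA]
      have h2 : Tendsto (fun n => ∫ ω in A, M n t ω ∂μ) atTop
          (𝓝 (∫ ω in A, Mlim t ω ∂μ)) :=
        integral_tendsto_of_tendsto_of_monotone (fun n => (hintM n t ht).restrict)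
          (hintlim t ht).restrict (ae_restrict_of_ae (hmonoAll t ht))
          (ae_restrict_of_ae (hconv t ht))
      refine le_of_tendsto h2 (Eventually.of_forall fun n => ?_)
      calc ∫ ω in A, M n t ω ∂μ = ∫ ω in A, (μ[M n t | 𝓕 s]) ω ∂μ :=
            (setIntegral_condExp hm (hintM n t ht) hA).symm
        _ ≤ ∫ ω in A, M n s ω ∂μ := integral_mono_ae integrable_condExp.restrict
              (hintM n s hs).restrict (ae_restrict_of_ae (hcondM n s t hs ht hst))
        _ ≤ ∫ ω in A, Mlim s ω ∂μ := integral_mono_ae (hintM n s hs).restrict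
              (hintlim s hs).restrict (ae_restrict_of_ae (hle n s hs))
    exact ae_le_of_ae_le_trim htr
  -- antitonicity of `E[Mlim t]`
  have hFanti : ∀ s ∈ Icc (0 : ℝ) T, ∀ t ∈ Icc (0 : ℝ) T, s ≤ t →
      ∫ ω, Mlim t ω ∂μ ≤ ∫ ω, Mlim s ω ∂μ := by
    intro s hs t ht hst
    rw [← integral_condExp (𝓕.le s) (f := Mlim t)]
    exact integral_mono_ae integrable_condExp (hintlim s hs) (hcond s t hs ht hst)
  refine ⟨⟨hmeas, hintlim, hcond⟩, ?_⟩
  -- right-continuity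
  intro t ht
  rcases eq_or_lt_of_le ht.2 with hTt | htT
  · subst hTt
    rw [Icc_self]
    exact continuousWithinAt_singleton
  -- `t < T`: use the sequence `q k = t + (T - t) / (k + 1)`
  set q : ℕ → ℝ := fun k => t + (T - t) / (k + 1) with hq_def
  have hqpos : ∀ k, t < q k := by
    intro k
    have hTt : (0 : ℝ) < T - t := sub_pos.2 htT
    have : (0 : ℝ) < (T - t) / (k + 1) := by positivity
    simpa [hq_def] using this
  have hqle : ∀ k, q k ≤ T := by
    intro k
    have h1 : (T - t) / (k + 1) ≤ T - t :=
      div_le_self (sub_pos.2 htT).le (by have := Nat.cast_nonneg (α := ℝ) k; linarith)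
    simp only [hq_def]
    linarith
  have hqmem : ∀ k, q k ∈ Icc (0 : ℝ) T := fun k => ⟨ht.1.trans (hqpos k).le, hqle k⟩
  have hqtend : Tendsto q atTop (𝓝 t) := by
    have h1 : Tendsto (fun k : ℕ => (T - t) * (1 / ((k : ℝ) + 1))) atTop (𝓝 ((T - t) * 0)) :=
      tendsto_one_div_add_atTop_nhds_zero_nat.const_mul (T - t)
    have h2 : Tendsto (fun k : ℕ => (T - t) / ((k : ℝ) + 1)) atTop (𝓝 0) := by
      simpa [div_eq_mul_inv] using h1
    simpa [hq_def] using tendsto_const_nhds.add h2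
  set F : ℝ → ℝ := fun u => ∫ ω, Mlim u ω ∂μ with hF_def
  have hBdd : BddAbove (range fun k => F (q k)) := by
    refine ⟨F t, ?_⟩
    rintro _ ⟨k, rfl⟩
    exact hFanti t ht (q k) (hqmem k) (hqpos k).le
  set L : ℝ := ⨆ k, F (q k) with hL_def
  have hFq_le_L : ∀ k, F (q k) ≤ L := fun k => le_ciSup hBdd k
  have hL0 : 0 ≤ L :=
    (integral_nonneg_of_ae (hMlim_nonneg (q 0) (hqmem 0))).trans (hFq_le_L 0)
  -- Fatou along the sequence `q` gives `E[M n t] ≤ L` for every `n`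
  have hFnL : ∀ n, ∫ ω, M n t ω ∂μ ≤ L := by
    intro n
    have key : ENNReal.ofReal (∫ ω, M n t ω ∂μ) ≤ ENNReal.ofReal L := by
      rw [ofReal_integral_eq_lintegral_ofReal (hintM n t ht) (hnonneg n t ht)]
      have heq : ∫⁻ ω, ENNReal.ofReal (M n t ω) ∂μ
          = ∫⁻ ω, liminf (fun k => ENNReal.ofReal (M n (q k) ω)) atTop ∂μ := by
        refine lintegral_congr_ae ?_
        filter_upwards [hMrc n] with ω hω
        have h1 : Tendsto (fun k => M n (q k) ω) atTop (𝓝 (M n t ω)) := by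
          refine (hω t ht).tendsto.comp ?_
          exact tendsto_nhdsWithin_of_tendsto_nhds_of_eventually_within _ hqtend
            (Eventually.of_forall fun k => (hqpos k).le)
        exact (((ENNReal.continuous_ofReal.tendsto _).comp h1).liminf_eq).symm
      rw [heq]
      refine le_trans (lintegral_liminf_le' fun k =>
        (hintM n (q k) (hqmem k)).aemeasurable.ennreal_ofReal) ?_
      have hb : ∀ k, ∫⁻ ω, ENNReal.ofReal (M n (q k) ω) ∂μ ≤ ENNReal.ofReal L := by
        intro k
        rw [← ofReal_integral_eq_lintegral_ofReal (hintM n (q k) (hqmem k))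
          (hnonneg n (q k) (hqmem k))]
        refine ENNReal.ofReal_le_ofReal ?_
        refine le_trans ?_ (hFq_le_L k)
        exact integral_mono_ae (hintM n (q k) (hqmem k)) (hintlim (q k) (hqmem k))
          (hle n (q k) (hqmem k))
      calc liminf (fun k => ∫⁻ ω, ENNReal.ofReal (M n (q k) ω) ∂μ) atTop
          ≤ liminf (fun _ : ℕ => ENNReal.ofReal L) atTop :=
            liminf_le_liminf (Eventually.of_forall hb)
        _ = ENNReal.ofReal L := liminf_const _
    rwa [ENNReal.ofReal_le_ofReal_iff hL0] at key
  have hFtL : F t ≤ L := le_of_tendsto (hFconv t ht) (Eventually.of_forall hFnL)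
  -- conclude right-continuity
  rw [← Ioc_insert_left ht.2]
  refine ContinuousWithinAt.insert ?_
  have : Tendsto F (𝓝[Ioc t T] t) (𝓝 (F t)) := by
    refine tendsto_order.2 ⟨fun l hl => ?_, fun u hu => ?_⟩
    · obtain ⟨k, hk⟩ := exists_lt_of_lt_ciSup (lt_of_lt_of_le hl hFtL)
      have h1 : ∀ᶠ v in 𝓝[Ioc t T] t, v < q k :=
        eventually_nhdsWithin_of_eventually_nhds (eventually_lt_nhds (hqpos k))
      filter_upwards [h1, self_mem_nhdsWithin] with v hv1 hv2
      exact lt_of_lt_of_le hk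
        (hFanti v ⟨ht.1.trans hv2.1.le, hv2.2⟩ (q k) (hqmem k) hv1.le)
    · filter_upwards [self_mem_nhdsWithin] with v hv
      exact lt_of_le_of_lt (hFanti t ht v ⟨ht.1.trans hv.1.le, hv.2⟩ hv.1.le) hu
  exact this
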